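/- With the setup of the linearisation (w solving w'' + p w' + q w = 0, W the Wronskian with a second solution w̃, z = w̃/w, g = w w'/W, and d/dz = (w²/W) d/ds), one has the identity g'' − 6 g g' + 4 g³ = −(q' + 2 p q) w⁶ / W³, where primes on g denote d/dz and q' denotes dq/ds. -/

import Mathlib

/-- with `g = w w'/W`, `z = w̃/w`, and `d/dz = (w²/W)·d/ds`,
one has `g'' − 6 g g' + 4 g³ = −(q' + 2 p q) w⁶/W³`. -/
theorem abel_linearisation_second_invariant
    (I : Set ℝ) (hI : IsOpen I)
    (p q q' w w' w'' wt wt' wt'' g dg g1 dg1 : ℝ → ℝ)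
    (hq : ∀ s ∈ I, HasDerivAt q (q' s) s)
    (hw : ∀ s ∈ I, HasDerivAt w (w' s) s)
    (hw' : ∀ s ∈ I, HasDerivAt w' (w'' s) s)
    (hwt : ∀ s ∈ I, HasDerivAt wt (wt' s) s)
    (hwt' : ∀ s ∈ I, HasDerivAt wt' (wt'' s) s)
    (hODEw : ∀ s ∈ I, w'' s + p s * w' s + q s * w s = 0)
    (hODEwt : ∀ s ∈ I, wt'' s + p s * wt' s + q s * wt s = 0)
    (hw0 : ∀ s ∈ I, w s ≠ 0)
    (hW0 : ∀ s ∈ I, wt' s * w s - w' s * wt s ≠ 0)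
    (hg : ∀ s ∈ I, g s = w s * w' s / (wt' s * w s - w' s * wt s))
    (hdg : ∀ s ∈ I, HasDerivAt g (dg s) s)
    (hg1 : ∀ s ∈ I, g1 s = (w s) ^ 2 / (wt' s * w s - w' s * wt s) * dg s)
    (hdg1 : ∀ s ∈ I, HasDerivAt g1 (dg1 s) s) :
    ∀ s ∈ I,
      (w s) ^ 2 / (wt' s * w s - w' s * wt s) * dg1 s
          - 6 * g s * g1 s + 4 * (g s) ^ 3
        = - (q' s + 2 * p s * q s) * (w s) ^ 6
            / (wt' s * w s - w' s * wt s) ^ 3 := by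
  -- Step 1: identify dg on I.
  have key : ∀ s ∈ I, dg s
      = (w' s * w' s - q s * (w s * w s)) / (wt' s * w s - w' s * wt s) := by
    intro s hs
    have hWd : HasDerivAt (fun t => wt' t * w t - w' t * wt t)
        (wt'' s * w s + wt' s * w' s - (w'' s * wt s + w' s * wt' s)) s :=
      ((hwt' s hs).mul (hw s hs)).sub ((hw' s hs).mul (hwt s hs))
    have hGd : HasDerivAt (fun t => w t * w' t / (wt' t * w t - w' t * wt t))
        (((w' s * w' s + w s * w'' s) * (wt' s * w s - w' s * wt s)
          - w s * w' s * (wt'' s * w s + wt' s * w' s - (w'' s * wt s + w' s * wt' s)))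
          / (wt' s * w s - w' s * wt s) ^ 2) s :=
      ((hw s hs).mul (hw' s hs)).div hWd (hW0 s hs)
    have heq : g =ᶠ[nhds s] fun t => w t * w' t / (wt' t * w t - w' t * wt t) := by
      filter_upwards [hI.mem_nhds hs] with t ht using hg t ht
    have hdgval : dg s
        = ((w' s * w' s + w s * w'' s) * (wt' s * w s - w' s * wt s)
          - w s * w' s * (wt'' s * w s + wt' s * w' s - (w'' s * wt s + w' s * wt' s)))
          / (wt' s * w s - w' s * wt s) ^ 2 :=
      (hdg s hs).unique (hGd.congr_of_eventuallyEq heq)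
    have hW := hW0 s hs
    have hu := hw0 s hs
    have hw2 : w'' s = -(p s * w' s + q s * w s) := by linarith [hODEw s hs]
    have hwt2 : wt'' s = -(p s * wt' s + q s * wt s) := by linarith [hODEwt s hs]
    rw [hdgval, hw2, hwt2]
    rw [div_eq_div_iff (pow_ne_zero 2 hW) hW]
    ring
  -- Step 2: identify dg1 at s.
  intro s hs
  have hW := hW0 s hs
  have hWd : HasDerivAt (fun t => wt' t * w t - w' t * wt t)
      (wt'' s * w s + wt' s * w' s - (w'' s * wt s + w' s * wt' s)) s :=
    ((hwt' s hs).mul (hw s hs)).sub ((hw' s hs).mul (hwt s hs))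
  have hGd1 := (((hw s hs).mul (hw s hs)).mul (((hw' s hs).mul (hw' s hs)).sub
      ((hq s hs).mul ((hw s hs).mul (hw s hs))))).div (hWd.mul hWd)
      (mul_ne_zero hW hW)
  have heq1 : g1 =ᶠ[nhds s] (fun t => w t * w t * (w' t * w' t - q t * (w t * w t))
      / ((wt' t * w t - w' t * wt t) * (wt' t * w t - w' t * wt t))) := by
    filter_upwards [hI.mem_nhds hs] with t ht
    rw [hg1 t ht, key t ht, div_mul_div_comm]
    congr 1
    ring
  have hdg1val := (hdg1 s hs).unique (hGd1.congr_of_eventuallyEq heq1)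
  have hw2 : w'' s = -(p s * w' s + q s * w s) := by linarith [hODEw s hs]
  have hwt2 : wt'' s = -(p s * wt' s + q s * wt s) := by linarith [hODEwt s hs]
  rw [hdg1val, hw2, hwt2] at *
  rw [hg s hs, hg1 s hs, key s hs]
  simp only [Pi.mul_apply, Pi.sub_apply] at *
  have hW' : w s * wt' s - w' s * wt s ≠ 0 := by rwa [mul_comm (w s)]
  field_simp
  ring
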